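/- The uniform Weyl twirl is completely depolarizing: for every matrix A : Matrix (Fin d) (Fin d) ℂ, (1/d²) • ∑_{(a,b) ∈ Fin d × Fin d} (X^(a:ℕ) * Z^(b:ℕ)) * A * (X^(a:ℕ) * Z^(b:ℕ))ᴴ = ((trace A)/d) • 1. -/

import Mathlib

open Matrix Complex

/-- The primitive `d`-th root of unity `ω = exp(2πi/d)`. -/
noncomputable def omega (d : ℕ) : ℂ := Complex.exp (2 * Real.pi * Complex.I / d)

/-- The generalized Pauli shift matrix `X` on a `d`-dimensional qudit:
`X i j = 1` iff `i = j + 1 (mod d)`. -/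
def PauliX (d : ℕ) [NeZero d] : Matrix (Fin d) (Fin d) ℂ :=
  Matrix.of fun i j => if i = j + 1 then 1 else 0

/-- The generalized Pauli phase matrix `Z = diag(1, ω, ω², …)`. -/
noncomputable def PauliZ (d : ℕ) [NeZero d] : Matrix (Fin d) (Fin d) ℂ :=
  Matrix.diagonal fun j => omega d ^ (j : ℕ)

section aux
variable (d : ℕ) [NeZero d]
open scoped Fin.NatCast Fin.CommRing

lemma omega_prim : IsPrimitiveRoot (omega d) d :=
  Complex.isPrimitiveRoot_exp d (NeZero.ne d)

lemma omega_ne_zero : omega d ≠ 0 := Complex.exp_ne_zero _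

lemma conj_omega : (starRingEnd ℂ) (omega d) = (omega d)⁻¹ := by
  rw [omega, ← Complex.exp_conj, ← Complex.exp_neg]
  congr 1
  simp [map_div₀, Complex.conj_I, map_ofNat]
  ring

lemma pauliX_pow (a : ℕ) :
    PauliX d ^ a = Matrix.of fun i j => if i = j + (a : Fin d) then 1 else 0 := by
  induction a with
  | zero => ext i j; simp [Matrix.one_apply, eq_comm]
  | succ a ih =>
    rw [pow_succ, ih]
    ext i j
    rw [Matrix.mul_apply]
    simp only [Matrix.of_apply, PauliX, mul_ite, mul_one, mul_zero, ite_mul, one_mul, zero_mul]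
    rw [Finset.sum_ite_eq' Finset.univ (j + 1) (fun k => if i = k + (a : Fin d) then (1:ℂ) else 0)]
    simp only [Finset.mem_univ, if_true]
    have h : j + 1 + (a : Fin d) = j + ((a : ℕ) + 1 : ℕ) := by push_cast; ring
    rw [h]

lemma sum_zeta (ζ : ℂ) (h1 : ζ ^ d = 1) (h2 : ζ ≠ 1) : ∑ b : Fin d, ζ ^ (b : ℕ) = 0 := by
  rw [Fin.sum_univ_eq_sum_range, geom_sum_eq h2, h1]
  simp

lemma ztwirl (A : Matrix (Fin d) (Fin d) ℂ) :
    ∑ b : Fin d, PauliZ d ^ (b : ℕ) * A * (PauliZ d ^ (b : ℕ))ᴴ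
      = (d : ℂ) • Matrix.diagonal (fun i => A i i) := by
  have hZ : ∀ b : ℕ, PauliZ d ^ b = Matrix.diagonal (fun k : Fin d => (omega d ^ (k : ℕ)) ^ b) := by
    intro b
    rw [PauliZ, Matrix.diagonal_pow]
    rfl
  ext i j
  simp only [hZ, Matrix.diagonal_conjTranspose, Matrix.sum_apply, Matrix.diagonal_mul,
    Matrix.mul_diagonal, Pi.star_apply, RCLike.star_def, map_pow, conj_omega, Matrix.smul_apply,
    Matrix.diagonal_apply, smul_eq_mul]
  have hterm : ∀ b : Fin d,
      (omega d ^ (i : ℕ)) ^ (b : ℕ) * A i j * ((omega d)⁻¹ ^ (j : ℕ)) ^ (b : ℕ)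
        = A i j * (omega d ^ (i : ℕ) * (omega d)⁻¹ ^ (j : ℕ)) ^ (b : ℕ) := by
    intro b; rw [mul_pow]; ring
  rw [Finset.sum_congr rfl fun b _ => hterm b, ← Finset.mul_sum]
  by_cases h : i = j
  · subst h
    have : omega d ^ (i : ℕ) * (omega d)⁻¹ ^ (i : ℕ) = 1 := by
      rw [inv_pow, mul_inv_cancel₀ (pow_ne_zero _ (omega_ne_zero d))]
    rw [this]
    simp [mul_comm]
  · have hz1 : (omega d ^ (i : ℕ) * (omega d)⁻¹ ^ (j : ℕ)) ^ d = 1 := by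
      have hr : (omega d ^ (i : ℕ) * (omega d)⁻¹ ^ (j : ℕ)) ^ d
          = (omega d ^ d) ^ (i : ℕ) * ((omega d ^ d)⁻¹) ^ (j : ℕ) := by ring
      rw [hr]
      simp [(omega_prim d).pow_eq_one]
    have hz2 : omega d ^ (i : ℕ) * (omega d)⁻¹ ^ (j : ℕ) ≠ 1 := by
      intro hc
      apply h
      have hj : (omega d)⁻¹ ^ (j : ℕ) = (omega d ^ (j : ℕ))⁻¹ := inv_pow _ _
      rw [hj] at hc
      have : omega d ^ (i : ℕ) = omega d ^ (j : ℕ) :=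
        (mul_inv_eq_one₀ (pow_ne_zero _ (omega_ne_zero d))).mp hc
      exact Fin.ext ((omega_prim d).pow_inj i.isLt j.isLt this)
    rw [sum_zeta d _ hz1 hz2]
    simp [h]

lemma xtwirl (v : Fin d → ℂ) :
    ∑ a : Fin d, PauliX d ^ (a : ℕ) * Matrix.diagonal v * (PauliX d ^ (a : ℕ))ᴴ
      = (∑ k, v k) • (1 : Matrix (Fin d) (Fin d) ℂ) := by
  have hM : ∀ a : Fin d, PauliX d ^ (a : ℕ) * Matrix.diagonal v
      = Matrix.of (fun i l => if i = l + a then v l else 0) := by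
    intro a; ext i l
    rw [pauliX_pow, Matrix.mul_diagonal]
    simp [Fin.cast_val_eq_self, ite_mul]
  have hX : ∀ a : Fin d, ∀ l j : Fin d,
      (PauliX d ^ (a : ℕ))ᴴ l j = if j = l + a then (1 : ℂ) else 0 := by
    intro a l j
    rw [Matrix.conjTranspose_apply, pauliX_pow]
    simp [Fin.cast_val_eq_self, apply_ite (starRingEnd ℂ)]
  ext i j
  rw [Matrix.sum_apply]
  have hterm : ∀ a : Fin d,
      (PauliX d ^ (a : ℕ) * Matrix.diagonal v * (PauliX d ^ (a : ℕ))ᴴ) i j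
        = if i = j then v (i - a) else 0 := by
    intro a
    rw [Matrix.mul_apply, Finset.sum_eq_single (i - a)]
    · rw [hM, hX]
      have h1 : i - a + a = i := by ring
      simp only [Matrix.of_apply, h1, if_pos rfl]
      by_cases h : i = j
      · subst h; simp
      · have : ¬ j = i := fun hc => h hc.symm
        simp [h, this]
    · intro l _ hl
      rw [hM]
      have : ¬ i = l + a := fun hc => hl (by rw [hc]; ring)
      simp [this]
    · simp
  rw [Finset.sum_congr rfl fun a _ => hterm a]
  by_cases h : i = j
  · subst h
    simp only [if_pos rfl]
    rw [Matrix.smul_apply, Matrix.one_apply_eq, smul_eq_mul, mul_one]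
    exact Equiv.sum_comp (Equiv.subLeft i) v
  · simp [Matrix.one_apply, h]

end aux

theorem weyl_twirl_depolarizing (d : ℕ) [NeZero d] (A : Matrix (Fin d) (Fin d) ℂ) :
    (1 / (d : ℂ) ^ 2) •
        ∑ p : Fin d × Fin d,
          (PauliX d ^ (p.1 : ℕ) * PauliZ d ^ (p.2 : ℕ)) * A *
            (PauliX d ^ (p.1 : ℕ) * PauliZ d ^ (p.2 : ℕ))ᴴ =
      (Matrix.trace A / d) • (1 : Matrix (Fin d) (Fin d) ℂ) := by
  rw [Fintype.sum_prod_type]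
  have hstep : ∀ a : Fin d,
      (∑ b : Fin d, (PauliX d ^ (a : ℕ) * PauliZ d ^ (b : ℕ)) * A *
          (PauliX d ^ (a : ℕ) * PauliZ d ^ (b : ℕ))ᴴ)
        = PauliX d ^ (a : ℕ) * ((d : ℂ) • Matrix.diagonal (fun i => A i i)) *
            (PauliX d ^ (a : ℕ))ᴴ := by
    intro a
    have : ∀ b : Fin d,
        (PauliX d ^ (a : ℕ) * PauliZ d ^ (b : ℕ)) * A *
            (PauliX d ^ (a : ℕ) * PauliZ d ^ (b : ℕ))ᴴ
          = PauliX d ^ (a : ℕ) * (PauliZ d ^ (b : ℕ) * A * (PauliZ d ^ (b : ℕ))ᴴ) *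
              (PauliX d ^ (a : ℕ))ᴴ := by
      intro b
      rw [Matrix.conjTranspose_mul]
      noncomm_ring
    rw [Finset.sum_congr rfl fun b _ => this b, ← Finset.sum_mul, ← Finset.mul_sum, ztwirl]
  rw [Finset.sum_congr rfl fun a _ => hstep a]
  simp_rw [Matrix.mul_smul, Matrix.smul_mul]
  rw [← Finset.smul_sum, xtwirl, smul_smul, smul_smul]
  congr 1
  have hd : (d : ℂ) ≠ 0 := Nat.cast_ne_zero.mpr (NeZero.ne d)
  rw [Matrix.trace]
  field_simp
  rfl
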